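/- Let X be a subshift over an arbitrary alphabet, and suppose x = αβ^∞ ∈ X for some finite word α and nonempty finite word β. If {x} ∈ U, then there exist n ≥ 1 and words γ₁, …, γ_n ∈ L_X such that F_{γ₁} ∩ ⋯ ∩ F_{γ_n} = {β^∞}; in particular, X does not satisfy condition (L). -/

import Mathlib

namespace SubshiftPaper

variable {A : Type*}

/-- The initial word of length `n` of a sequence. -/
def word (x : ℕ → A) (n : ℕ) : List A := List.ofFn (fun i : Fin n => x i)

/-- Concatenation of a finite word with an infinite sequence. -/
def cat (α : List A) (x : ℕ → A) : ℕ → A := fun n =>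
  if h : n < α.length then α.get ⟨n, h⟩ else x (n - α.length)

/-- The shift map on infinite sequences. -/
def shiftSeq (x : ℕ → A) : ℕ → A := fun n => x (n + 1)

/-- `X` is a subshift: the set of sequences avoiding a set `F` of forbidden nonempty
finite words. -/
def IsSubshift (X : Set (ℕ → A)) : Prop :=
  ∃ F : Set (List A), (∀ w ∈ F, w ≠ []) ∧
    X = {x : ℕ → A | ∀ n k : ℕ, word (fun i => x (n + i)) k ∉ F}

/-- The language of `X`: all finite initial blocks of elements of `X` (and their
subblocks appear by shifting; for subshifts initial blocks suffice). -/
def language (X : Set (ℕ → A)) : Set (List A) :=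
  {α | ∃ x ∈ X, word x α.length = α}

open Classical in
/-- The product metric `d(x,y) = 2^{-min{n : xₙ ≠ yₙ}}`. -/
noncomputable def prodDist (x y : ℕ → A) : ℝ :=
  if h : x = y then 0 else (2 : ℝ)⁻¹ ^ Nat.find (Function.ne_iff.mp h)

/-- The cylinder set `Z_α = {x ∈ X : x starts with α}`. -/
def cylinder (X : Set (ℕ → A)) (α : List A) : Set (ℕ → A) :=
  {x ∈ X | word x α.length = α}

/-- The set `C(α,β) = {βx : βx ∈ X and αx ∈ X}`. -/
def Cab (X : Set (ℕ → A)) (α β : List A) : Set (ℕ → A) :=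
  {y | ∃ x : ℕ → A, y = cat β x ∧ cat β x ∈ X ∧ cat α x ∈ X}

/-- The follower set `F_α = {x ∈ X : αx ∈ X}`. -/
def follower (X : Set (ℕ → A)) (α : List A) : Set (ℕ → A) :=
  {x ∈ X | cat α x ∈ X}

/-- The Boolean algebra `U` of subsets of `X` generated by the sets `C(α,β)`: the smallest
collection of subsets containing all `C(α,β)` and `X` and closed under finite unions, finite
intersections and complements in `X`. -/
def BA (X : Set (ℕ → A)) : Set (Set (ℕ → A)) :=
  ⋂₀ {C : Set (Set (ℕ → A)) | X ∈ C ∧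
    (∀ α ∈ language X, ∀ β ∈ language X, Cab X α β ∈ C) ∧
    (∀ S ∈ C, ∀ T ∈ C, S ∪ T ∈ C) ∧
    (∀ S ∈ C, ∀ T ∈ C, S ∩ T ∈ C) ∧
    (∀ S ∈ C, X \ S ∈ C)}

/-- The periodic sequence `γ^∞ = γγγ⋯`. -/
def per (γ : List A) (h : γ ≠ []) : ℕ → A :=
  fun n => γ.get ⟨n % γ.length, Nat.mod_lt n (List.length_pos_of_ne_nil h)⟩

/-- A point is eventually periodic if it has the form `αγ^∞`. -/
def EventuallyPeriodic (x : ℕ → A) : Prop :=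
  ∃ (α γ : List A) (h : γ ≠ []), x = cat α (per γ h)

/-- Condition (L): for every finite `P ⊆ L_X` and every nonempty `γ ∈ L_X` with
`γ^∞ ∈ F_P := ⋂_{α ∈ P} F_α`, the set `F_P` contains an element other than `γ^∞`. -/
def ConditionL (X : Set (ℕ → A)) : Prop :=
  ∀ P : Finset (List A), ↑P ⊆ language X →
    ∀ γ ∈ language X, ∀ h : γ ≠ [],
      per γ h ∈ X ∩ ⋂ α ∈ P, follower X α →
        ∃ z ∈ X ∩ ⋂ α ∈ P, follower X α, z ≠ per γ h


section Basics
variable {A : Type*}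

lemma length_word (x : ℕ → A) (n : ℕ) : (word x n).length = n := by
  simp [word]

lemma word_getElem (x : ℕ → A) {n i : ℕ} (h : i < n) :
    (word x n)[i]'(by simpa [word] using h) = x i := by
  simp [word]

lemma word_eq_iff {x y : ℕ → A} {n : ℕ} :
    word x n = word y n ↔ ∀ i < n, x i = y i := by
  constructor
  · intro h i hi
    have h1 := congrArg (fun l : List A => l[i]?) h
    simp only [word, List.getElem?_ofFn, hi, dif_pos] at h1
    simpa [List.ofFnNthVal, hi] using h1
  · intro h
    apply List.ext_getElem (by simp [word])
    intro i h1 h2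
    have hi : i < n := by simpa [word] using h1
    simp [word, h i hi]

lemma cat_lt (a : List A) (x : ℕ → A) {n : ℕ} (h : n < a.length) :
    cat a x n = a[n] := by
  simp [cat, h]

lemma cat_ge (a : List A) (x : ℕ → A) {n : ℕ} (h : a.length ≤ n) :
    cat a x n = x (n - a.length) := by
  simp [cat, Nat.not_lt.mpr h]

lemma cat_shift (a : List A) (x : ℕ → A) (n : ℕ) :
    cat a x (a.length + n) = x n := by
  rw [cat_ge a x (Nat.le_add_right _ _)]
  congr 1
  omega

lemma cat_word (x : ℕ → A) (k : ℕ) :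
    cat (word x k) (fun i => x (k + i)) = x := by
  funext n
  rcases lt_or_ge n k with h | h
  · rw [cat_lt _ _ (by simpa [length_word] using h), word_getElem x h]
  · rw [cat_ge _ _ (by simpa [length_word] using h), length_word]
    congr 1
    omega

lemma word_cat (d : List A) (y : ℕ → A) : word (cat d y) d.length = d := by
  apply List.ext_getElem (by simp [length_word])
  intro i h1 h2
  have hi : i < d.length := by simpa [length_word] using h1
  rw [word_getElem _ hi, cat_lt _ _ hi]

lemma cat_append (a b : List A) (z : ℕ → A) : cat (a ++ b) z = cat a (cat b z) := by
  funext n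
  rcases lt_or_ge n a.length with h | h
  · rw [cat_lt _ _ (by simp; omega), cat_lt _ _ h, List.getElem_append_left h]
  · rcases lt_or_ge n (a.length + b.length) with h2 | h2
    · rw [cat_lt _ _ (by simp; omega), cat_ge _ _ h, cat_lt _ _ (by omega)]
      rw [List.getElem_append_right (by omega)]
    · rw [cat_ge _ _ (by simp; omega), cat_ge _ _ h, cat_ge _ _ (by omega)]
      congr 1
      simp; omega

lemma word_add (x : ℕ → A) (m n : ℕ) :
    word x (m + n) = word x m ++ word (fun i => x (m + i)) n := by
  apply List.ext_getElem (by simp [length_word])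
  intro i h1 h2
  have hi : i < m + n := by simpa [length_word] using h1
  rcases lt_or_ge i m with h | h
  · rw [word_getElem x hi, List.getElem_append_left (by simpa [length_word] using h),
      word_getElem x h]
  · rw [word_getElem x hi, List.getElem_append_right (by simpa [length_word] using h)]
    rw [word_getElem]
    · congr 1; simp [length_word]; omega
    · simp [length_word]; omega

lemma per_mul_add (γ : List A) (h : γ ≠ []) (m n : ℕ) :
    per γ h (m * γ.length + n) = per γ h n := by
  have hmod : (m * γ.length + n) % γ.length = n % γ.length := by
    rw [mul_comm]; exact Nat.mul_add_mod _ _ _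
  simp [per, hmod]

lemma word_per (γ : List A) (h : γ ≠ []) : word (per γ h) γ.length = γ := by
  apply List.ext_getElem (by simp [length_word])
  intro i h1 h2
  have hi : i < γ.length := by simpa [length_word] using h1
  rw [word_getElem _ hi]
  simp [per, Nat.mod_eq_of_lt hi]

lemma shift_mem {X : Set (ℕ → A)} (hX : IsSubshift X) {y : ℕ → A} (hy : y ∈ X) (m : ℕ) :
    (fun i => y (m + i)) ∈ X := by
  obtain ⟨F, -, hF⟩ := hX
  rw [hF] at hy ⊢
  intro n k
  have := hy (m + n) k
  have he : (fun i => y (m + n + i)) = (fun i => y (m + (n + i))) := by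
    funext i; congr 1; omega
  rwa [he] at this

lemma not_mem_bound {X : Set (ℕ → A)} (hX : IsSubshift X) {y : ℕ → A} (hy : y ∉ X) :
    ∃ N : ℕ, ∀ y' : ℕ → A, (∀ i < N, y' i = y i) → y' ∉ X := by
  obtain ⟨F, -, hF⟩ := hX
  rw [hF] at hy
  simp only [Set.mem_setOf_eq] at hy
  push_neg at hy
  obtain ⟨n, k, hnk⟩ := hy
  refine ⟨n + k, fun y' hag hy' => ?_⟩
  rw [hF] at hy'
  apply hy' n k
  have : word (fun i => y' (n + i)) k = word (fun i => y (n + i)) k :=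
    word_eq_iff.mpr fun i hi => hag (n + i) (by omega)
  rwa [this]

lemma Cab_subset {X : Set (ℕ → A)} (a b : List A) : Cab X a b ⊆ X := by
  rintro y ⟨x, rfl, h2, -⟩
  exact h2

end Basics

section Phi
variable {A : Type*}

/-- Pairs of words in the language. -/
def langPairs (X : Set (ℕ → A)) : Set (List A × List A) :=
  {p | p.1 ∈ language X ∧ p.2 ∈ language X}

/-- A basic conjunction set. -/
def conjSet (X : Set (ℕ → A)) (I J : Finset (List A × List A)) : Set (ℕ → A) :=
  X ∩ ((⋂ p ∈ I, Cab X p.1 p.2) ∩ ⋂ p ∈ J, X \ Cab X p.1 p.2)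

lemma conjSet_subset (X : Set (ℕ → A)) (I J : Finset (List A × List A)) :
    conjSet X I J ⊆ X := fun _ h => h.1

lemma conjSet_union (X : Set (ℕ → A)) (I₁ J₁ I₂ J₂ : Finset (List A × List A))
    [DecidableEq (List A × List A)] :
    conjSet X (I₁ ∪ I₂) (J₁ ∪ J₂) = conjSet X I₁ J₁ ∩ conjSet X I₂ J₂ := by
  ext y
  simp only [conjSet, Set.mem_inter_iff, Set.mem_iInter, Finset.mem_union]
  constructor
  · rintro ⟨h1, h2, h3⟩
    exact ⟨⟨h1, fun p hp => h2 p (Or.inl hp), fun p hp => h3 p (Or.inl hp)⟩,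
      ⟨h1, fun p hp => h2 p (Or.inr hp), fun p hp => h3 p (Or.inr hp)⟩⟩
  · rintro ⟨⟨h1, h2, h3⟩, ⟨-, h4, h5⟩⟩
    exact ⟨h1, fun p hp => hp.elim (h2 p) (h4 p), fun p hp => hp.elim (h3 p) (h5 p)⟩

/-- `S` contains, around `x0`, a basic conjunction set. -/
def Phi (X : Set (ℕ → A)) (x0 : ℕ → A) (S : Set (ℕ → A)) : Prop :=
  x0 ∈ S → ∃ I J : Finset (List A × List A), ↑I ⊆ langPairs X ∧ ↑J ⊆ langPairs X ∧
    x0 ∈ conjSet X I J ∧ conjSet X I J ⊆ S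

lemma Phi_inter {X : Set (ℕ → A)} {x0 : ℕ → A} {S T : Set (ℕ → A)}
    (hS : Phi X x0 S) (hT : Phi X x0 T) : Phi X x0 (S ∩ T) := by
  classical
  rintro ⟨h1, h2⟩
  obtain ⟨I₁, J₁, hI₁, hJ₁, hm₁, hs₁⟩ := hS h1
  obtain ⟨I₂, J₂, hI₂, hJ₂, hm₂, hs₂⟩ := hT h2
  refine ⟨I₁ ∪ I₂, J₁ ∪ J₂, ?_, ?_, ?_, ?_⟩
  · intro p hp
    rcases Finset.mem_union.mp (by exact_mod_cast hp) with h | h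
    · exact hI₁ h
    · exact hI₂ h
  · intro p hp
    rcases Finset.mem_union.mp (by exact_mod_cast hp) with h | h
    · exact hJ₁ h
    · exact hJ₂ h
  · rw [conjSet_union]; exact ⟨hm₁, hm₂⟩
  · rw [conjSet_union]; exact fun y hy => ⟨hs₁ hy.1, hs₂ hy.2⟩

lemma Phi_congr {X : Set (ℕ → A)} {x0 : ℕ → A} {S T : Set (ℕ → A)} (h : S = T)
    (hS : Phi X x0 S) : Phi X x0 T := h ▸ hS

lemma mem_BA_phi {A : Type*} (X : Set (ℕ → A)) (x0 : ℕ → A) {S : Set (ℕ → A)}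
    (hS : S ∈ BA X) : Phi X x0 S := by
  classical
  have key : S ∈ {T : Set (ℕ → A) | T ⊆ X ∧ Phi X x0 T ∧ Phi X x0 (X \ T)} := by
    apply hS
    refine ⟨⟨le_refl X, ?_, ?_⟩, ?_, ?_, ?_, ?_⟩
    · intro h
      exact ⟨∅, ∅, by simp, by simp, by simp [conjSet, h], conjSet_subset X ∅ ∅⟩
    · intro h
      exact absurd h.1 h.2
    · intro a ha b hb
      refine ⟨Cab_subset a b, ?_, ?_⟩
      · intro h
        refine ⟨{(a, b)}, ∅, by simp [langPairs, ha, hb], by simp, ?_, ?_⟩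
        · simp only [conjSet, Set.mem_inter_iff, Set.mem_iInter, Finset.mem_singleton]
          exact ⟨Cab_subset a b h, fun p hp => hp ▸ h, by simp⟩
        · intro y hy
          have := hy.2.1
          simp only [Set.mem_iInter, Finset.mem_singleton] at this
          exact this (a, b) rfl
      · intro h
        refine ⟨∅, {(a, b)}, by simp, by simp [langPairs, ha, hb], ?_, ?_⟩
        · simp only [conjSet, Set.mem_inter_iff, Set.mem_iInter, Finset.mem_singleton]
          exact ⟨h.1, by simp, fun p hp => hp ▸ h⟩
        · intro y hy
          have := hy.2.2
          simp only [Set.mem_iInter, Finset.mem_singleton] at this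
          exact this (a, b) rfl
    · rintro S₁ ⟨hS₁X, hS₁, hS₁c⟩ S₂ ⟨hS₂X, hS₂, hS₂c⟩
      refine ⟨Set.union_subset hS₁X hS₂X, ?_, ?_⟩
      · rintro (h | h)
        · obtain ⟨I, J, hI, hJ, hm, hs⟩ := hS₁ h
          exact ⟨I, J, hI, hJ, hm, fun y hy => Or.inl (hs hy)⟩
        · obtain ⟨I, J, hI, hJ, hm, hs⟩ := hS₂ h
          exact ⟨I, J, hI, hJ, hm, fun y hy => Or.inr (hs hy)⟩
      · have := Phi_inter hS₁c hS₂c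
        apply Phi_congr _ this
        ext y
        simp only [Set.mem_inter_iff, Set.mem_diff, Set.mem_union]
        tauto
    · rintro S₁ ⟨hS₁X, hS₁, hS₁c⟩ S₂ ⟨hS₂X, hS₂, hS₂c⟩
      refine ⟨fun y hy => hS₁X hy.1, Phi_inter hS₁ hS₂, ?_⟩
      intro h
      have hx0X : x0 ∈ X := h.1
      have : x0 ∉ S₁ ∨ x0 ∉ S₂ := by
        by_contra hc
        push_neg at hc
        exact h.2 ⟨hc.1, hc.2⟩
      rcases this with hn | hn
      · obtain ⟨I, J, hI, hJ, hm, hs⟩ := hS₁c ⟨hx0X, hn⟩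
        exact ⟨I, J, hI, hJ, hm, fun y hy => ⟨(hs hy).1, fun hy2 => (hs hy).2 hy2.1⟩⟩
      · obtain ⟨I, J, hI, hJ, hm, hs⟩ := hS₂c ⟨hx0X, hn⟩
        exact ⟨I, J, hI, hJ, hm, fun y hy => ⟨(hs hy).1, fun hy2 => (hs hy).2 hy2.2⟩⟩
    · rintro S₁ ⟨hS₁X, hS₁, hS₁c⟩
      refine ⟨Set.diff_subset, hS₁c, ?_⟩
      intro h
      have hx0 : x0 ∈ S₁ := by
        by_contra hc
        exact h.2 ⟨h.1, hc⟩
      obtain ⟨I, J, hI, hJ, hm, hs⟩ := hS₁ hx0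
      refine ⟨I, J, hI, hJ, hm, fun y hy => ⟨(conjSet_subset X I J) hy, fun hy2 => hy2.2 (hs hy)⟩⟩
  exact key.2.1

end Phi

section Main
variable {A : Type*}

lemma main_extract (X : Set (ℕ → A)) (hX : IsSubshift X)
    (α γ : List A) (hγ : γ ≠ []) (hx : cat α (per γ hγ) ∈ X)
    (hU : {cat α (per γ hγ)} ∈ BA X) :
    ∃ Q : Finset (List A), Q.Nonempty ∧ ↑Q ⊆ language X ∧
      (⋂ δ ∈ Q, follower X δ) = {per γ hγ} := by
  classical
  set x := cat α (per γ hγ) with hxdef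
  have hL : 0 < γ.length := List.length_pos_iff.mpr hγ
  obtain ⟨I, J, hIlang, hJlang, hmem, hsub⟩ := mem_BA_phi X x hU rfl
  have hmemI : ∀ p ∈ I, x ∈ Cab X p.1 p.2 := by
    have := hmem.2.1
    simp only [Set.mem_iInter] at this
    exact this
  have hmemJ : ∀ p ∈ J, x ∉ Cab X p.1 p.2 := by
    have := hmem.2.2
    simp only [Set.mem_iInter] at this
    exact fun p hp => (this p hp).2
  -- bounds for the J-part
  have keyJ : ∀ p : List A × List A, ∃ N : ℕ, p ∈ J → word x p.2.length = p.2 →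
      ∀ y' : ℕ → A, (∀ i < N, y' i = cat p.1 (fun j => x (p.2.length + j)) i) → y' ∉ X := by
    intro p
    by_cases hp : p ∈ J ∧ word x p.2.length = p.2
    · obtain ⟨hpJ, hpw⟩ := hp
      have hxsplit : cat p.2 (fun j => x (p.2.length + j)) = x := by
        have h := cat_word x p.2.length
        rwa [hpw] at h
      have hnot : cat p.1 (fun j => x (p.2.length + j)) ∉ X := by
        intro hc
        exact hmemJ p hpJ ⟨fun j => x (p.2.length + j), hxsplit.symm, by rw [hxsplit]; exact hx, hc⟩
      obtain ⟨N, hN⟩ := not_mem_bound hX hnot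
      exact ⟨N, fun _ _ => hN⟩
    · exact ⟨0, fun h1 h2 => absurd ⟨h1, h2⟩ hp⟩
  choose N hN using keyJ
  obtain ⟨m0, hmI, hmJ, hmα⟩ : ∃ m0 : ℕ, (∀ p ∈ I, p.2.length ≤ m0) ∧
      (∀ p ∈ J, p.2.length + N p ≤ m0) ∧ α.length ≤ m0 := by
    refine ⟨(I.sup fun p => p.2.length) + (J.sup fun p => p.2.length + N p) + α.length,
      ?_, ?_, by omega⟩
    · intro p hp
      have h := Finset.le_sup (f := fun q : List A × List A => q.2.length) hp
      omega
    · intro p hp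
      have h := Finset.le_sup (f := fun q : List A × List A => q.2.length + N q) hp
      omega
  set k := α.length + m0 * γ.length with hkdef
  have hm0k : m0 ≤ k := by
    have h1 : m0 ≤ m0 * γ.length := Nat.le_mul_of_pos_right _ hL
    omega
  have xtail : ∀ n, x (k + n) = per γ hγ n := by
    intro n
    have h1 := cat_shift α (per γ hγ) (m0 * γ.length + n)
    rw [show α.length + (m0 * γ.length + n) = k + n by omega] at h1
    rw [hxdef]
    rw [h1]
    exact per_mul_add γ hγ m0 n
  have hcatw : cat (word x k) (per γ hγ) = x := by
    have h1 := cat_word x k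
    have h2 : (fun i => x (k + i)) = per γ hγ := funext xtail
    rwa [h2] at h1
  have hperX : per γ hγ ∈ X := by
    have h2 : (fun i => x (k + i)) = per γ hγ := funext xtail
    exact h2 ▸ shift_mem hX hx k
  have hsplit : ∀ b : ℕ, b ≤ k →
      word x k = word x b ++ word (fun i => x (b + i)) (k - b) := by
    intro b hb
    have h := word_add x b (k - b)
    rwa [show b + (k - b) = k by omega] at h
  have hcattail : ∀ b : ℕ, b ≤ k →
      cat (word (fun i => x (b + i)) (k - b)) (per γ hγ) = fun i => x (b + i) := by
    intro b hb
    funext n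
    rcases lt_or_ge n (k - b) with h | h
    · rw [cat_lt _ _ (by simpa [length_word] using h), word_getElem _ h]
    · rw [cat_ge _ _ (by simpa [length_word] using h), length_word]
      rw [← xtail (n - (k - b))]
      congr 1
      omega
  -- the words associated to I
  set cw : List A × List A → List A :=
    fun p => word (fun i => x (p.2.length + i)) (k - p.2.length) with hcw
  have hwpI : ∀ p ∈ I, word x p.2.length = p.2 := by
    intro p hp
    obtain ⟨x', hx'1, -, -⟩ := hmemI p hp
    rw [hx'1]
    exact word_cat p.2 x'
  have hbI : ∀ p ∈ I, p.2.length ≤ k := fun p hp => (hmI p hp).trans hm0k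
  have hbJ : ∀ p ∈ J, p.2.length ≤ k := fun p hp => le_trans (by have := hmJ p hp; omega) hm0k
  have hcatI : ∀ p ∈ I, cat p.1 (fun i => x (p.2.length + i)) ∈ X := by
    intro p hp
    obtain ⟨x', hx'1, -, hx'3⟩ := hmemI p hp
    have hx'eq : x' = fun i => x (p.2.length + i) := by
      funext n
      rw [hx'1, cat_shift]
    exact hx'eq ▸ hx'3
  have hgI : ∀ p ∈ I, cat (p.1 ++ cw p) (per γ hγ) ∈ X := by
    intro p hp
    rw [cat_append, hcw, hcattail p.2.length (hbI p hp)]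
    exact hcatI p hp
  -- the finite set Q
  refine ⟨insert (word x k) (I.image fun p => p.1 ++ cw p), ⟨_, Finset.mem_insert_self _ _⟩,
    ?_, ?_⟩
  · intro δ hδ
    simp only [Finset.coe_insert, Set.mem_insert_iff, Finset.coe_image, Set.mem_image,
      Finset.mem_coe] at hδ
    rcases hδ with rfl | ⟨p, hp, rfl⟩
    · exact ⟨x, hx, by rw [length_word]⟩
    · exact ⟨cat (p.1 ++ cw p) (per γ hγ), hgI p hp, word_cat _ _⟩
  · apply Set.eq_of_subset_of_subset
    · intro z hz
      simp only [Set.mem_iInter, Finset.mem_insert, Finset.mem_image] at hz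
      have hzX : z ∈ X := (hz (word x k) (Or.inl rfl)).1
      have hzw : cat (word x k) z ∈ X := (hz (word x k) (Or.inl rfl)).2
      have hzI : ∀ p ∈ I, cat (p.1 ++ cw p) z ∈ X := by
        intro p hp
        exact (hz (p.1 ++ cw p) (Or.inr ⟨p, hp, rfl⟩)).2
      set y := cat (word x k) z with hy
      have hyk : ∀ j < k, y j = x j := by
        intro j hj
        rw [hy, cat_lt _ _ (by simpa [length_word] using hj), word_getElem _ hj]
      have hyI : ∀ p ∈ I, y ∈ Cab X p.1 p.2 := by
        intro p hp
        refine ⟨cat (cw p) z, ?_, ?_, ?_⟩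
        · rw [← cat_append, hcw, ← hwpI p hp, ← hsplit p.2.length (hbI p hp)]
        · rw [← cat_append, hcw, ← hwpI p hp, ← hsplit p.2.length (hbI p hp)]
          exact hzw
        · rw [← cat_append]
          exact hzI p hp
      have hyJ : ∀ p ∈ J, y ∉ Cab X p.1 p.2 := by
        rintro p hp ⟨x', h1, h2, h3⟩
        have hwyp : word y p.2.length = p.2 := by
          rw [h1]; exact word_cat p.2 x'
        have hwxp : word x p.2.length = p.2 := by
          have hxy : word x p.2.length = word y p.2.length :=
            word_eq_iff.mpr fun i hi => (hyk i (lt_of_lt_of_le hi (hbJ p hp))).symm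
          rw [hxy, hwyp]
        have hx'n : ∀ n, x' n = y (p.2.length + n) := by
          intro n
          rw [h1, cat_shift]
        refine hN p hp hwxp (cat p.1 x') ?_ h3
        intro i hi
        rcases lt_or_ge i p.1.length with h | h
        · rw [cat_lt _ _ h, cat_lt _ _ h]
        · rw [cat_ge _ _ h, cat_ge _ _ h, hx'n]
          have hlt : p.2.length + (i - p.1.length) < k := by
            have := hmJ p hp
            omega
          rw [hyk _ hlt]
      have hymem : y ∈ conjSet X I J := by
        refine ⟨hzw, ?_, ?_⟩
        · simp only [Set.mem_iInter]
          exact hyI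
        · simp only [Set.mem_iInter]
          exact fun p hp => ⟨hzw, hyJ p hp⟩
      have hyx : y = x := hsub hymem
      funext n
      have h6 : y (k + n) = z n := by
        rw [hy, cat_ge _ _ (by rw [length_word]; omega), length_word]
        congr 1
        omega
      calc z n = y (k + n) := h6.symm
        _ = x (k + n) := by rw [hyx]
        _ = per γ hγ n := xtail n
    · intro z hz
      rw [Set.mem_singleton_iff] at hz
      subst hz
      simp only [Set.mem_iInter, Finset.mem_insert, Finset.mem_image]
      rintro δ (rfl | ⟨p, hp, rfl⟩)
      · exact ⟨hperX, by rw [hcatw]; exact hx⟩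
      · exact ⟨hperX, hgI p hp⟩

end Main

/-- if `x = αγ^∞ ∈ X` and `{x} ∈ U`, then there are finitely many (at least one)
words `γ₁, …, γ_n ∈ L_X` with `F_{γ₁} ∩ ⋯ ∩ F_{γ_n} = {γ^∞}`; in particular `X` does not
satisfy condition (L). -/
theorem stmt5 {A : Type*} (X : Set (ℕ → A)) (hX : IsSubshift X)
    (α γ : List A) (hγ : γ ≠ []) (hx : cat α (per γ hγ) ∈ X)
    (hU : {cat α (per γ hγ)} ∈ BA X) :
    (∃ Q : Finset (List A), Q.Nonempty ∧ ↑Q ⊆ language X ∧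
      (⋂ δ ∈ Q, follower X δ) = {per γ hγ}) ∧ ¬ ConditionL X := by
  obtain ⟨Q, hQne, hQlang, hQeq⟩ := main_extract X hX α γ hγ hx hU
  refine ⟨⟨Q, hQne, hQlang, hQeq⟩, ?_⟩
  intro hC
  have hper_mem : per γ hγ ∈ ⋂ δ ∈ Q, follower X δ := by rw [hQeq]; rfl
  obtain ⟨δ0, hδ0⟩ := hQne
  have hperX : per γ hγ ∈ X := (Set.mem_iInter₂.mp hper_mem δ0 hδ0).1
  have hγlang : γ ∈ language X := ⟨per γ hγ, hperX, word_per γ hγ⟩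
  obtain ⟨z, hz, hzne⟩ := hC Q hQlang γ hγlang hγ ⟨hperX, hper_mem⟩
  apply hzne
  have h2 := hz.2
  rw [hQeq] at h2
  exact h2

end SubshiftPaper
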